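/- Let k be an algebraically closed field with char k ∉ {2,3}, and let a, b, c ∈ k satisfy abc ≠ 0 and (3abc)³ ≠ (a³+b³+c³)³. In the Sklyanin algebra S(a,b,c), suppose r and s are elements of the k-linear span of the images of the generators x, y, z, suppose r and s are linearly independent, and suppose r·s = q·(s·r) for some nonzero q ∈ k. Then q = −1 and a = b. -/

import Mathlib

noncomputable section

/-- The free algebra on three generators `x, y, z` (indexed by `Fin 3`). -/
abbrev F3 (k : Type) [Field k] : Type := FreeAlgebra k (Fin 3)

noncomputable def X (k : Type) [Field k] : F3 k := FreeAlgebra.ι k 0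
noncomputable def Y (k : Type) [Field k] : F3 k := FreeAlgebra.ι k 1
noncomputable def Z (k : Type) [Field k] : F3 k := FreeAlgebra.ι k 2

/-- The quotient of the free algebra on `x, y, z` by the two-sided ideal
generated by the set `rels`. -/
abbrev quotAlg (k : Type) [Field k] (rels : Set (F3 k)) : Type :=
  RingQuot (fun a b : F3 k => a ∈ rels ∧ b = 0)

/-- The image of the `i`-th generator in the quotient algebra. -/
noncomputable def gen (k : Type) [Field k] (rels : Set (F3 k)) (i : Fin 3) :
    quotAlg k rels :=
  RingQuot.mkAlgHom k (fun a b : F3 k => a ∈ rels ∧ b = 0) (FreeAlgebra.ι k i)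

/-- The `k`-linear span of the images of the generators in the quotient. -/
noncomputable def genSpan (k : Type) [Field k] (rels : Set (F3 k)) :
    Submodule k (quotAlg k rels) :=
  Submodule.span k (Set.range (gen k rels))

/-- There is a graded isomorphism between the two quotient algebras:
a `k`-algebra isomorphism carrying the span of the generators onto the
span of the generators. -/
def GradedIso (k : Type) [Field k] (r1 r2 : Set (F3 k)) : Prop :=
  ∃ φ : quotAlg k r1 ≃ₐ[k] quotAlg k r2,
    Submodule.map φ.toLinearMap (genSpan k r1) = genSpan k r2

/-- Relations of the three-dimensional Sklyanin algebra `S(a,b,c)`: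
`⟨a·yz + b·zy + c·x², a·zx + b·xz + c·y², a·xy + b·yx + c·z²⟩`. -/
noncomputable def Sklrel (k : Type) [Field k] (a b c : k) : Set (F3 k) :=
  {a • (Y k * Z k) + b • (Z k * Y k) + c • X k ^ 2,
   a • (Z k * X k) + b • (X k * Z k) + c • Y k ^ 2,
   a • (X k * Y k) + b • (Y k * X k) + c • Z k ^ 2}


-- Part A: representation via 5x5 matrices
def emb3 : Fin 3 → Fin 5 := ![1, 2, 3]

lemma emb3_ne_zero (i : Fin 3) : emb3 i ≠ 0 := by fin_cases i <;> decide
lemma four_ne_emb3 (i : Fin 3) : (4 : Fin 5) ≠ emb3 i := by fin_cases i <;> decide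
lemma emb3_inj (i j : Fin 3) (h : i ≠ j) : emb3 i ≠ emb3 j := by
  fin_cases i <;> fin_cases j <;> simp_all <;> decide

variable {k : Type} [Field k]

def umat (M : Matrix (Fin 3) (Fin 3) k) (i : Fin 3) : Matrix (Fin 5) (Fin 5) k :=
  Matrix.single 0 (emb3 i) 1 + ∑ l : Fin 3, M l i • Matrix.single (emb3 l) (4:Fin 5) (1:k)

lemma umul (M : Matrix (Fin 3) (Fin 3) k) (i j : Fin 3) :
    umat M i * umat M j = M i j • Matrix.single (0 : Fin 5) 4 1 := by
  unfold umat
  rw [add_mul, mul_add, mul_add]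
  have e1 : Matrix.single (0 : Fin 5) (emb3 i) (1:k) *
      Matrix.single (0:Fin 5) (emb3 j) (1:k) = 0 :=
    Matrix.single_mul_single_of_ne _ _ _ _ (emb3_ne_zero i) _
  have e2 : (∑ l : Fin 3, M l i • Matrix.single (emb3 l) (4:Fin 5) (1:k)) *
      Matrix.single (0:Fin 5) (emb3 j) (1:k) = 0 := by
    rw [Finset.sum_mul]
    refine Finset.sum_eq_zero fun l _ => ?_
    rw [smul_mul_assoc, Matrix.single_mul_single_of_ne _ _ _ _ (show (4:Fin 5) ≠ 0 by decide) _, smul_zero]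
  have e3 : Matrix.single (0 : Fin 5) (emb3 i) (1:k) *
      (∑ l : Fin 3, M l j • Matrix.single (emb3 l) (4:Fin 5) (1:k))
      = M i j • Matrix.single (0 : Fin 5) 4 1 := by
    rw [Finset.mul_sum, Finset.sum_eq_single i]
    · rw [mul_smul_comm, Matrix.single_mul_single_same, mul_one]
    · intro l _ hl
      rw [mul_smul_comm, Matrix.single_mul_single_of_ne _ _ _ _ (emb3_inj i l (Ne.symm hl)) _, smul_zero]
    · intro h; exact absurd (Finset.mem_univ i) h
  have e4 : (∑ l : Fin 3, M l i • Matrix.single (emb3 l) (4:Fin 5) (1:k)) *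
      (∑ l : Fin 3, M l j • Matrix.single (emb3 l) (4:Fin 5) (1:k)) = 0 := by
    rw [Finset.sum_mul]
    refine Finset.sum_eq_zero fun l _ => ?_
    rw [smul_mul_assoc, Finset.mul_sum]
    refine smul_eq_zero_of_right _ (Finset.sum_eq_zero fun l' _ => ?_)
    rw [mul_smul_comm, Matrix.single_mul_single_of_ne _ _ _ _ (four_ne_emb3 l') _, smul_zero]
  rw [e1, e3, e2, e4]
  simp

lemma key (a b c q : k) (M : Matrix (Fin 3) (Fin 3) k)
    (h1 : a * M 1 2 + b * M 2 1 + c * M 0 0 = 0)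
    (h2 : a * M 2 0 + b * M 0 2 + c * M 1 1 = 0)
    (h3 : a * M 0 1 + b * M 1 0 + c * M 2 2 = 0)
    (al be : Fin 3 → k)
    (hrs : (∑ i, al i • gen k (Sklrel k a b c) i) * (∑ i, be i • gen k (Sklrel k a b c) i)
         = q • ((∑ i, be i • gen k (Sklrel k a b c) i) * (∑ i, al i • gen k (Sklrel k a b c) i))) :
    ∑ i, ∑ j, (al i * be j - q * (be i * al j)) * M i j = 0 := by
  classical
  set f : F3 k →ₐ[k] Matrix (Fin 5) (Fin 5) k := FreeAlgebra.lift k (umat M) with hf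
  have hfι : ∀ i, f (FreeAlgebra.ι k i) = umat M i := fun i => FreeAlgebra.lift_ι_apply _ _
  have hrel : ∀ x ∈ Sklrel k a b c, f x = 0 := by
    rintro x hx
    rcases hx with h | h | h <;> rw [h] <;>
      simp only [X, Y, Z, map_add, map_smul, map_mul, map_pow, hfι, pow_two, umul] <;>
      rw [smul_smul, smul_smul, smul_smul, ← add_smul, ← add_smul]
    · rw [show a * M 1 2 + b * M 2 1 + c * M 0 0 = 0 from h1, zero_smul]
    · rw [show a * M 2 0 + b * M 0 2 + c * M 1 1 = 0 from h2, zero_smul]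
    · rw [show a * M 0 1 + b * M 1 0 + c * M 2 2 = 0 from h3, zero_smul]
  set Ψ : quotAlg k (Sklrel k a b c) →ₐ[k] Matrix (Fin 5) (Fin 5) k :=
    RingQuot.liftAlgHom k ⟨f, by rintro x y ⟨hx, rfl⟩; rw [map_zero]; exact hrel x hx⟩ with hΨ
  have hgen : ∀ i, Ψ (gen k (Sklrel k a b c) i) = umat M i := by
    intro i
    rw [gen, hΨ, RingQuot.liftAlgHom_mkAlgHom_apply]
    exact hfι i
  have h' : (∑ i, al i • umat M i) * (∑ i, be i • umat M i)
      = q • ((∑ i, be i • umat M i) * (∑ i, al i • umat M i)) := by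
    have := congrArg Ψ hrs
    simpa only [map_mul, map_smul, map_sum, hgen] using this
  have h0 := congrArg (fun m => m 0 4) h'
  simp only [Fin.sum_univ_three, add_mul, mul_add, smul_mul_assoc, mul_smul_comm, umul, smul_smul,
    smul_add, Matrix.add_apply, Matrix.smul_apply, Matrix.single_apply_same,
    smul_eq_mul, mul_one] at h0
  simp only [Fin.sum_univ_three]
  linear_combination h0

lemma comb (NA NB NC ND P1 P2 Q1 Q2 : k) (ha : NA = P1) (hb : NB = P2)
    (hc : NC = Q1) (hd : ND = Q2) (h : NA * NB = NC * ND) : P1 * P2 = Q1 * Q2 := by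
  rw [← ha, ← hb, ← hc, ← hd]; exact h

lemma cube_lemma (μ ν q : k) (hμ : μ^3 = 1) (hν : ν^3 = 1) :
    ((μ - q*ν)^3 + (ν - q*μ)^3 + (1-q)^3)^3 = 27*((μ - q*ν)*((ν - q*μ)*(1-q)))^3 := by
  have hg : (μ^2*ν - 1) * ((μ^2*ν)^2 + μ^2*ν + 1) = 0 := by
    linear_combination (ν^3*(μ^3+1))*hμ + hν
  rcases mul_eq_zero.mp hg with h1 | h2
  · have hνμ : ν = μ := by linear_combination μ*h1 + (-ν)*hμ
    rw [hνμ]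
    linear_combination ((1-q)^9*(μ^3-1)*(8*μ^3+1))*hμ
  · have hX3 : (μ - q*ν)^3 = (1-q^3) - 3*(μ^2*ν)*q + 3*(μ^2*ν)^2*q^2 := by
      linear_combination (1 - 3*q^2*μ*ν^2)*hμ + (-(q^3))*hν
    have hY3 : (ν - q*μ)^3 = (1-q^3) - 3*(μ^2*ν)^2*q + 3*(μ^2*ν)*q^2 := by
      linear_combination (-(q^3) + 3*q*μ*ν^2)*hμ + hν
    have hsum : (μ - q*ν)^3 + (ν - q*μ)^3 + (1-q)^3 = 3*(1-q^3) := by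
      linear_combination hX3 + hY3 + (3*q^2 - 3*q)*h2
    have hprod : (μ - q*ν)^3 * ((ν - q*μ)^3 * (1-q)^3) = (1-q^3)^3 := by
      rw [hX3, hY3]
      linear_combination ((μ^2*ν)^2*(9*q^6 - 27*q^5 + 27*q^4 - 9*q^3)
        + (μ^2*ν)*(-9*q^7 + 18*q^6 - 9*q^5 + 9*q^4 - 18*q^3 + 9*q^2)
        + (3*q^8 - 3*q^7 - 6*q^5 + 6*q^4 + 3*q^2 - 3*q))*h2
    linear_combination (((μ - q*ν)^3 + (ν - q*μ)^3 + (1-q)^3)^2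
      + ((μ - q*ν)^3 + (ν - q*μ)^3 + (1-q)^3)*(3*(1-q^3)) + (3*(1-q^3))^2)*hsum + (-27)*hprod

lemma partB (a b c q : k) (ha : a ≠ 0) (hb : b ≠ 0) (hc : c ≠ 0)
    (h2k : (2:k) ≠ 0)
    (hEC : (3*(a*b*c))^3 ≠ (a^3+b^3+c^3)^3)
    (al be : Fin 3 → k)
    (hsym : ¬ ∀ i j, al i * be j = al j * be i)
    (e1 : a * (al 0*be 0 - q*(be 0*al 0)) = c * (al 1*be 2 - q*(be 1*al 2)))
    (e2 : a * (al 1*be 1 - q*(be 1*al 1)) = c * (al 2*be 0 - q*(be 2*al 0)))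
    (e3 : a * (al 2*be 2 - q*(be 2*al 2)) = c * (al 0*be 1 - q*(be 0*al 1)))
    (e4 : a * (al 2*be 1 - q*(be 2*al 1)) = b * (al 1*be 2 - q*(be 1*al 2)))
    (e5 : a * (al 0*be 2 - q*(be 0*al 2)) = b * (al 2*be 0 - q*(be 2*al 0)))
    (e6 : a * (al 1*be 0 - q*(be 1*al 0)) = b * (al 0*be 1 - q*(be 0*al 1))) :
    q = -1 ∧ a = b := by
  obtain ⟨p, t12⟩ : ∃ p, al 1*be 2 - q*(be 1*al 2) = a*p :=
    ⟨(al 1*be 2 - q*(be 1*al 2))/a, by field_simp⟩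
  obtain ⟨u, t20⟩ : ∃ u, al 2*be 0 - q*(be 2*al 0) = a*u :=
    ⟨(al 2*be 0 - q*(be 2*al 0))/a, by field_simp⟩
  obtain ⟨v, t01⟩ : ∃ v, al 0*be 1 - q*(be 0*al 1) = a*v :=
    ⟨(al 0*be 1 - q*(be 0*al 1))/a, by field_simp⟩
  have t21 : al 2*be 1 - q*(be 2*al 1) = b*p := by
    apply mul_left_cancel₀ ha; linear_combination e4 + b*t12
  have t02 : al 0*be 2 - q*(be 0*al 2) = b*u := by
    apply mul_left_cancel₀ ha; linear_combination e5 + b*t20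
  have t10 : al 1*be 0 - q*(be 1*al 0) = b*v := by
    apply mul_left_cancel₀ ha; linear_combination e6 + b*t01
  have t00 : al 0*be 0 - q*(be 0*al 0) = c*p := by
    apply mul_left_cancel₀ ha; linear_combination e1 + c*t12
  have t11 : al 1*be 1 - q*(be 1*al 1) = c*u := by
    apply mul_left_cancel₀ ha; linear_combination e2 + c*t20
  have t22 : al 2*be 2 - q*(be 2*al 2) = c*v := by
    apply mul_left_cancel₀ ha; linear_combination e3 + c*t01
  -- the (1-q^2)-scaled rank-one matrix equations
  have n00 : (1-q^2)*(al 0*be 0) = (1+q)*(c*p) := by linear_combination (1+q)*t00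
  have n11 : (1-q^2)*(al 1*be 1) = (1+q)*(c*u) := by linear_combination (1+q)*t11
  have n22 : (1-q^2)*(al 2*be 2) = (1+q)*(c*v) := by linear_combination (1+q)*t22
  have n01 : (1-q^2)*(al 0*be 1) = (a+b*q)*v := by linear_combination t01 + q*t10
  have n10 : (1-q^2)*(al 1*be 0) = (b+a*q)*v := by linear_combination t10 + q*t01
  have n12 : (1-q^2)*(al 1*be 2) = (a+b*q)*p := by linear_combination t12 + q*t21
  have n21 : (1-q^2)*(al 2*be 1) = (b+a*q)*p := by linear_combination t21 + q*t12
  have n20 : (1-q^2)*(al 2*be 0) = (a+b*q)*u := by linear_combination t20 + q*t02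
  have n02 : (1-q^2)*(al 0*be 2) = (b+a*q)*u := by linear_combination t02 + q*t20
  by_cases hq1 : q = 1
  · exfalso
    subst hq1
    have hp0 : p = 0 := by
      have hcp : c*p = 0 :=
        ((mul_eq_zero.mp (show (2:k)*(c*p) = 0 by linear_combination -n00)).resolve_left h2k)
      exact (mul_eq_zero.mp hcp).resolve_left hc
    have hu0 : u = 0 := by
      have hcu : c*u = 0 :=
        ((mul_eq_zero.mp (show (2:k)*(c*u) = 0 by linear_combination -n11)).resolve_left h2k)
      exact (mul_eq_zero.mp hcu).resolve_left hc
    have hv0 : v = 0 := by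
      have hcv : c*v = 0 :=
        ((mul_eq_zero.mp (show (2:k)*(c*v) = 0 by linear_combination -n22)).resolve_left h2k)
      exact (mul_eq_zero.mp hcv).resolve_left hc
    apply hsym
    intro i j
    fin_cases i <;> fin_cases j
    · rfl
    · show al 0*be 1 = al 1*be 0; linear_combination t01 + a*hv0
    · show al 0*be 2 = al 2*be 0; linear_combination t02 + b*hu0
    · show al 1*be 0 = al 0*be 1; linear_combination t10 + b*hv0
    · rfl
    · show al 1*be 2 = al 2*be 1; linear_combination t12 + a*hp0
    · show al 2*be 0 = al 0*be 2; linear_combination t20 + a*hu0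
    · show al 2*be 1 = al 1*be 2; linear_combination t21 + b*hp0
    · rfl
  by_cases hqm1 : q = -1
  · subst hqm1
    refine ⟨rfl, ?_⟩
    by_contra hab
    have hab' : a - b ≠ 0 := sub_ne_zero.mpr hab
    have hv0 : v = 0 :=
      (mul_eq_zero.mp (show (a-b)*v = 0 by linear_combination t10 - t01)).resolve_left hab'
    have hp0 : p = 0 :=
      (mul_eq_zero.mp (show (a-b)*p = 0 by linear_combination t21 - t12)).resolve_left hab'
    have hu0 : u = 0 :=
      (mul_eq_zero.mp (show (a-b)*u = 0 by linear_combination t02 - t20)).resolve_left hab'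
    have hm00 : al 0 * be 0 = 0 :=
      (mul_eq_zero.mp (show (2:k)*(al 0*be 0) = 0 by
        linear_combination t00 + c*hp0)).resolve_left h2k
    have hm11 : al 1 * be 1 = 0 :=
      (mul_eq_zero.mp (show (2:k)*(al 1*be 1) = 0 by
        linear_combination t11 + c*hu0)).resolve_left h2k
    have hm22 : al 2 * be 2 = 0 :=
      (mul_eq_zero.mp (show (2:k)*(al 2*be 2) = 0 by
        linear_combination t22 + c*hv0)).resolve_left h2k
    have hs01 : al 0*be 1 + al 1*be 0 = 0 := by linear_combination t01 + a*hv0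
    have hs02 : al 0*be 2 + al 2*be 0 = 0 := by linear_combination t02 + b*hu0
    have hs12 : al 1*be 2 + al 2*be 1 = 0 := by linear_combination t12 + a*hp0
    have hm01 : al 0*be 1 = 0 := by
      have h : (al 0*be 1)^2 = 0 := by
        linear_combination (al 0*be 1)*hs01 - (al 1*be 1)*hm00
      exact (pow_eq_zero_iff two_ne_zero).mp h
    have hm10 : al 1*be 0 = 0 := by linear_combination hs01 - hm01
    have hm02 : al 0*be 2 = 0 := by
      have h : (al 0*be 2)^2 = 0 := by
        linear_combination (al 0*be 2)*hs02 - (al 2*be 2)*hm00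
      exact (pow_eq_zero_iff two_ne_zero).mp h
    have hm20 : al 2*be 0 = 0 := by linear_combination hs02 - hm02
    have hm12 : al 1*be 2 = 0 := by
      have h : (al 1*be 2)^2 = 0 := by
        linear_combination (al 1*be 2)*hs12 - (al 2*be 2)*hm11
      exact (pow_eq_zero_iff two_ne_zero).mp h
    have hm21 : al 2*be 1 = 0 := by linear_combination hs12 - hm12
    apply hsym
    intro i j
    fin_cases i <;> fin_cases j
    · rfl
    · exact hm01.trans hm10.symm
    · exact hm02.trans hm20.symm
    · exact hm10.trans hm01.symm
    · rfl
    · exact hm12.trans hm21.symm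
    · exact hm20.trans hm02.symm
    · exact hm21.trans hm12.symm
    · rfl
  -- main case : q ≠ 1, q ≠ -1 : contradiction with hEC
  exfalso
  have h1q : (1:k) - q ≠ 0 := sub_ne_zero.mpr (Ne.symm hq1)
  have h1q' : (1:k) + q ≠ 0 := fun h => hqm1 (by linear_combination h)
  have hc2 : (1:k) - q^2 ≠ 0 := fun h => (mul_ne_zero h1q h1q') (by linear_combination h)
  have he : (1+q)*c ≠ 0 := mul_ne_zero h1q' hc
  have zz : ∀ x y : k, (1-q^2)*x = y → y = 0 → x = 0 := fun x y h hy =>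
    (mul_eq_zero.mp (h.trans hy)).resolve_left hc2
  have hpuv : ¬(p = 0 ∧ u = 0 ∧ v = 0) := by
    rintro ⟨hp0, hu0, hv0⟩
    have hm00 := zz _ _ n00 (by rw [hp0]; ring)
    have hm11 := zz _ _ n11 (by rw [hu0]; ring)
    have hm22 := zz _ _ n22 (by rw [hv0]; ring)
    have hm01 := zz _ _ n01 (by rw [hv0]; ring)
    have hm10 := zz _ _ n10 (by rw [hv0]; ring)
    have hm12 := zz _ _ n12 (by rw [hp0]; ring)
    have hm21 := zz _ _ n21 (by rw [hp0]; ring)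
    have hm20 := zz _ _ n20 (by rw [hu0]; ring)
    have hm02 := zz _ _ n02 (by rw [hu0]; ring)
    apply hsym
    intro i j
    fin_cases i <;> fin_cases j
    · rfl
    · exact hm01.trans hm10.symm
    · exact hm02.trans hm20.symm
    · exact hm10.trans hm01.symm
    · rfl
    · exact hm12.trans hm21.symm
    · exact hm20.trans hm02.symm
    · exact hm21.trans hm12.symm
    · rfl
  have x2 : ((1+q)*(c*u)) * ((1+q)*(c*v)) = ((a+b*q)*p) * ((b+a*q)*p) :=
    comb _ _ _ _ _ _ _ _ n11 n22 n12 n21 (by ring)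
  have x4 : ((1+q)*(c*p)) * ((a+b*q)*p) = ((b+a*q)*u) * ((b+a*q)*v) :=
    comb _ _ _ _ _ _ _ _ n00 n12 n02 n10 (by ring)
  have x5 : ((1+q)*(c*p)) * ((b+a*q)*p) = ((a+b*q)*v) * ((a+b*q)*u) :=
    comb _ _ _ _ _ _ _ _ n00 n21 n01 n20 (by ring)
  have x6 : ((1+q)*(c*u)) * ((a+b*q)*u) = ((b+a*q)*v) * ((b+a*q)*p) :=
    comb _ _ _ _ _ _ _ _ n11 n20 n10 n21 (by ring)
  have x7 : ((1+q)*(c*u)) * ((b+a*q)*u) = ((a+b*q)*v) * ((a+b*q)*p) :=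
    comb _ _ _ _ _ _ _ _ n11 n02 n01 n12 (by ring)
  have x8 : ((1+q)*(c*v)) * ((a+b*q)*v) = ((b+a*q)*p) * ((b+a*q)*u) :=
    comb _ _ _ _ _ _ _ _ n22 n01 n21 n02 (by ring)
  have x9 : ((1+q)*(c*v)) * ((b+a*q)*v) = ((a+b*q)*p) * ((a+b*q)*u) :=
    comb _ _ _ _ _ _ _ _ n22 n10 n12 n20 (by ring)
  have sqz : ∀ w z : k, w ≠ 0 → w*(z*z) = 0 → z = 0 := by
    intro w z hw h
    rcases mul_eq_zero.mp h with h | h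
    · exact absurd h hw
    · exact mul_self_eq_zero.mp h
  have hAB : ¬((a+b*q) = 0 ∧ (b+a*q) = 0) := by
    rintro ⟨hA0, hB0⟩
    exact (mul_ne_zero ha hc2) (by linear_combination hA0 - q*hB0)
  have hA' : a + b*q ≠ 0 := by
    intro hA0
    have hB0 : b + a*q ≠ 0 := fun h => hAB ⟨hA0, h⟩
    refine hpuv ⟨?_, ?_, ?_⟩
    · refine sqz ((1+q)*c*(b+a*q)) p (mul_ne_zero he hB0) ?_
      linear_combination x5 + ((a+b*q)*v*u)*hA0
    · refine sqz ((1+q)*c*(b+a*q)) u (mul_ne_zero he hB0) ?_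
      linear_combination x7 + ((a+b*q)*v*p)*hA0
    · refine sqz ((1+q)*c*(b+a*q)) v (mul_ne_zero he hB0) ?_
      linear_combination x9 + ((a+b*q)*p*u)*hA0
  have hB' : b + a*q ≠ 0 := by
    intro hB0
    refine hpuv ⟨?_, ?_, ?_⟩
    · refine sqz ((1+q)*c*(a+b*q)) p (mul_ne_zero he hA') ?_
      linear_combination x4 + ((b+a*q)*u*v)*hB0
    · refine sqz ((1+q)*c*(a+b*q)) u (mul_ne_zero he hA') ?_
      linear_combination x6 + ((b+a*q)*v*p)*hB0
    · refine sqz ((1+q)*c*(a+b*q)) v (mul_ne_zero he hA') ?_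
      linear_combination x8 + ((b+a*q)*p*u)*hB0
  have hp : p ≠ 0 := by
    intro hp0
    refine hpuv ⟨hp0, ?_, ?_⟩
    · refine sqz ((1+q)*c*(b+a*q)) u (mul_ne_zero he hB') ?_
      linear_combination x7 + ((a+b*q)*v*(a+b*q))*hp0
    · refine sqz ((1+q)*c*(b+a*q)) v (mul_ne_zero he hB') ?_
      linear_combination x9 + ((a+b*q)*(a+b*q)*u)*hp0
  have hu : u ≠ 0 := by
    intro hu0
    apply hp
    refine sqz ((1+q)*c*(b+a*q)) p (mul_ne_zero he hB') ?_
    linear_combination x5 + ((a+b*q)*v*(a+b*q))*hu0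
  have hv : v ≠ 0 := by
    intro hv0
    apply hp
    refine sqz ((1+q)*c*(a+b*q)) p (mul_ne_zero he hA') ?_
    linear_combination x4 + ((b+a*q)*u*(b+a*q))*hv0
  have hA3 : ((1+q)*c)^3 = (a+b*q)^3 := by
    apply mul_right_cancel₀ (show (b+a*q)*(p*p*(u*v)) ≠ 0 from
      mul_ne_zero hB' (mul_ne_zero (mul_ne_zero hp hp) (mul_ne_zero hu hv)))
    linear_combination (((1+q)*c)^2*(u*v))*x5 + ((a+b*q)^2*(u*v))*x2
  have hB3 : ((1+q)*c)^3 = (b+a*q)^3 := by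
    apply mul_right_cancel₀ (show (a+b*q)*(p*p*(u*v)) ≠ 0 from
      mul_ne_zero hA' (mul_ne_zero (mul_ne_zero hp hp) (mul_ne_zero hu hv)))
    linear_combination (((1+q)*c)^2*(u*v))*x4 + ((b+a*q)^2*(u*v))*x2
  obtain ⟨μ, hμe⟩ : ∃ μ, μ*((1+q)*c) = a+b*q := ⟨(a+b*q)/((1+q)*c), by field_simp⟩
  obtain ⟨ν, hνe⟩ : ∃ ν, ν*((1+q)*c) = b+a*q := ⟨(b+a*q)/((1+q)*c), by field_simp⟩
  have hμ3 : μ^3 = 1 := by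
    apply mul_right_cancel₀ (pow_ne_zero 3 he)
    linear_combination ((μ*((1+q)*c))^2 + (μ*((1+q)*c))*(a+b*q) + (a+b*q)^2)*hμe - hA3
  have hν3 : ν^3 = 1 := by
    apply mul_right_cancel₀ (pow_ne_zero 3 he)
    linear_combination ((ν*((1+q)*c))^2 + (ν*((1+q)*c))*(b+a*q) + (b+a*q)^2)*hνe - hB3
  have key9 := cube_lemma μ ν q hμ3 hν3
  have ha' : a*(1-q) = c*(μ - q*ν) := by
    apply mul_right_cancel₀ h1q'
    linear_combination q*hνe - hμe
  have hb' : b*(1-q) = c*(ν - q*μ) := by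
    apply mul_right_cancel₀ h1q'
    linear_combination q*hμe - hνe
  have hple : ((3*(a*b*c))^3 - (a^3+b^3+c^3)^3) * (1-q)^9 = 0 := by
    calc ((3*(a*b*c))^3 - (a^3+b^3+c^3)^3) * (1-q)^9
        = 27*((a*(1-q))^3*((b*(1-q))^3*(c*(1-q))^3))
          - ((a*(1-q))^3 + (b*(1-q))^3 + (c*(1-q))^3)^3 := by ring
      _ = 27*((c*(μ - q*ν))^3*((c*(ν - q*μ))^3*(c*(1-q))^3))
          - ((c*(μ - q*ν))^3 + (c*(ν - q*μ))^3 + (c*(1-q))^3)^3 := by rw [ha', hb']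
      _ = 0 := by linear_combination (-(c^9))*key9
  rcases mul_eq_zero.mp hple with h | h
  · exact hEC (by linear_combination h)
  · exact (pow_ne_zero 9 h1q) h


theorem stmt14 (k : Type) [Field k] [IsAlgClosed k]
    (hchar2 : ringChar k ≠ 2) (hchar3 : ringChar k ≠ 3)
    (a b c : k) (habc : a * b * c ≠ 0)
    (hEC : (3 * (a * b * c)) ^ 3 ≠ (a ^ 3 + b ^ 3 + c ^ 3) ^ 3)
    (r s : quotAlg k (Sklrel k a b c))
    (hr : r ∈ genSpan k (Sklrel k a b c)) (hs : s ∈ genSpan k (Sklrel k a b c))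
    (hind : LinearIndependent k ![r, s])
    (q : k) (hq : q ≠ 0) (hrs : r * s = q • (s * r)) :
    q = -1 ∧ a = b := by
  classical
  have ha : a ≠ 0 := fun h => habc (by rw [h]; ring)
  have hbne : b ≠ 0 := fun h => habc (by rw [h]; ring)
  have hcne : c ≠ 0 := fun h => habc (by rw [h]; ring)
  have h2k : (2:k) ≠ 0 := Ring.two_ne_zero hchar2
  obtain ⟨al, hal⟩ := (Submodule.mem_span_range_iff_exists_fun k).mp hr
  obtain ⟨be, hbe⟩ := (Submodule.mem_span_range_iff_exists_fun k).mp hs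
  rw [← hal, ← hbe] at hrs
  have hdep := LinearIndependent.pair_iff.mp hind
  have hsym : ¬ ∀ i j, al i * be j = al j * be i := by
    intro hsymm
    by_cases hbe0 : ∀ j, be j = 0
    · have hs0 : s = 0 := by
        rw [← hbe]; exact Finset.sum_eq_zero fun i _ => by rw [hbe0 i, zero_smul]
      exact one_ne_zero (hdep 0 1 (by rw [hs0, smul_zero, zero_smul, add_zero])).2
    · push_neg at hbe0
      obtain ⟨j, hbj⟩ := hbe0
      refine hbj (hdep (be j) (-(al j)) ?_).1
      rw [← hal, ← hbe, Finset.smul_sum, Finset.smul_sum, ← Finset.sum_add_distrib]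
      refine Finset.sum_eq_zero fun i _ => ?_
      rw [smul_smul, smul_smul, ← add_smul,
        show be j * al i + (-(al j))*(be i) = 0 from by linear_combination hsymm i j, zero_smul]
  have K1 := key a b c q !![a,0,0; 0,0,-c; 0,0,0]
    (by simp [Matrix.cons_val_two, Matrix.vecHead, Matrix.vecTail] <;> ring) (by simp [Matrix.cons_val_two, Matrix.vecHead, Matrix.vecTail] <;> ring) (by simp [Matrix.cons_val_two, Matrix.vecHead, Matrix.vecTail] <;> ring) al be hrs
  have K2 := key a b c q !![0,0,0; 0,a,0; -c,0,0]
    (by simp [Matrix.cons_val_two, Matrix.vecHead, Matrix.vecTail] <;> ring) (by simp [Matrix.cons_val_two, Matrix.vecHead, Matrix.vecTail] <;> ring) (by simp [Matrix.cons_val_two, Matrix.vecHead, Matrix.vecTail] <;> ring) al be hrs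
  have K3 := key a b c q !![0,-c,0; 0,0,0; 0,0,a]
    (by simp [Matrix.cons_val_two, Matrix.vecHead, Matrix.vecTail] <;> ring) (by simp [Matrix.cons_val_two, Matrix.vecHead, Matrix.vecTail] <;> ring) (by simp [Matrix.cons_val_two, Matrix.vecHead, Matrix.vecTail] <;> ring) al be hrs
  have K4 := key a b c q !![0,0,0; 0,0,-b; 0,a,0]
    (by simp [Matrix.cons_val_two, Matrix.vecHead, Matrix.vecTail] <;> ring) (by simp [Matrix.cons_val_two, Matrix.vecHead, Matrix.vecTail] <;> ring) (by simp [Matrix.cons_val_two, Matrix.vecHead, Matrix.vecTail] <;> ring) al be hrs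
  have K5 := key a b c q !![0,0,a; 0,0,0; -b,0,0]
    (by simp [Matrix.cons_val_two, Matrix.vecHead, Matrix.vecTail] <;> ring) (by simp [Matrix.cons_val_two, Matrix.vecHead, Matrix.vecTail] <;> ring) (by simp [Matrix.cons_val_two, Matrix.vecHead, Matrix.vecTail] <;> ring) al be hrs
  have K6 := key a b c q !![0,-b,0; a,0,0; 0,0,0]
    (by simp [Matrix.cons_val_two, Matrix.vecHead, Matrix.vecTail] <;> ring) (by simp [Matrix.cons_val_two, Matrix.vecHead, Matrix.vecTail] <;> ring) (by simp [Matrix.cons_val_two, Matrix.vecHead, Matrix.vecTail] <;> ring) al be hrs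
  simp only [Fin.sum_univ_three] at K1 K2 K3 K4 K5 K6
  simp [Matrix.cons_val_two, Matrix.vecHead, Matrix.vecTail] at K1 K2 K3 K4 K5 K6
  refine partB a b c q ha hbne hcne h2k hEC al be hsym ?_ ?_ ?_ ?_ ?_ ?_
  · linear_combination K1
  · linear_combination K2
  · linear_combination K3
  · linear_combination K4
  · linear_combination K5
  · linear_combination K6
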